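/- Let R be a commutative ring with identity. If every prime ideal of R is a direct sum of cyclic R-modules, then the Krull dimension of R is at most 1. -/

import Mathlib

/-- An ideal `P` of a commutative ring `R` is an internal direct sum of cyclic
`R`-modules: there is a family of elements of `P` whose cyclic spans are
independent and whose supremum is `P`. -/
def IsDirectSumOfCyclics {R : Type} [CommRing R] (P : Ideal R) : Prop :=
  ∃ (ι : Type) (w : ι → R), (∀ i, w i ∈ P) ∧
    iSupIndep (fun i => Ideal.span {w i}) ∧ (⨆ i, Ideal.span {w i}) = P

/-- If a prime `P` is a direct sum of cyclics and is not contained in a prime `Q'`,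
then `P ≤ Q' ⊔ span {w}` for a single element `w ∈ P \ Q'`. -/
lemma exists_span_singleton_of_isDirectSumOfCyclics
    {R : Type} [CommRing R] {P Q' : Ideal R} (hQ' : Q'.IsPrime)
    (hP : IsDirectSumOfCyclics P) (hns : ¬ P ≤ Q') :
    ∃ w, w ∈ P ∧ w ∉ Q' ∧ P ≤ Q' ⊔ Ideal.span {w} := by
  obtain ⟨ι, w, hw, hind, hsup⟩ := hP
  -- at most one index has w i ∉ Q'
  have hpair : ∀ i j : ι, i ≠ j → w i ∉ Q' → w j ∈ Q' := by
    intro i j hij hi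
    have hz : w i * w j = 0 := by
      have h1 : w i * w j ∈ Ideal.span {w i} := Ideal.mul_mem_right _ _
        (Ideal.subset_span rfl)
      have h2 : w i * w j ∈ ⨆ k, ⨆ (_ : k ≠ i), Ideal.span {w k} :=
        Submodule.mem_iSup_of_mem j (Submodule.mem_iSup_of_mem (Ne.symm hij)
          (Ideal.mul_mem_left _ _ (Ideal.subset_span rfl)))
      have hz0 : w i * w j ∈ (⊥ : Ideal R) :=
        (hind i).le_bot (Submodule.mem_inf.mpr ⟨h1, h2⟩)
      simpa using hz0
    have : w i * w j ∈ Q' := by rw [hz]; exact Q'.zero_mem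
    rcases hQ'.mem_or_mem this with h | h
    · exact absurd h hi
    · exact h
  -- there is some index with w i ∉ Q'
  have hex : ∃ i, w i ∉ Q' := by
    by_contra hc
    push_neg at hc
    apply hns
    rw [← hsup]
    exact iSup_le fun i => (Ideal.span_singleton_le_iff_mem _).mpr (hc i)
  obtain ⟨i₀, hi₀⟩ := hex
  refine ⟨w i₀, hw i₀, hi₀, ?_⟩
  rw [← hsup]
  refine iSup_le fun i => ?_
  by_cases hii : i = i₀
  · subst hii; exact le_sup_right
  · exact le_trans ((Ideal.span_singleton_le_iff_mem _).mpr (hpair i₀ i (Ne.symm hii) hi₀))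
      le_sup_left

theorem krullDim_le_one_of_primes_direct_sum_of_cyclics
    {R : Type} [CommRing R]
    (h : ∀ P : Ideal R, P.IsPrime → IsDirectSumOfCyclics P) :
    ringKrullDim R ≤ 1 := by
  rw [ringKrullDim, Order.krullDim]
  refine iSup_le fun p => ?_
  by_contra hlen
  push_neg at hlen
  have hlen2 : 2 ≤ p.length := by
    by_contra hc
    push_neg at hc
    interval_cases hp : p.length <;> simp_all <;> exact lt_asymm hlen zero_lt_one
  -- extract a chain of three primes
  set i0 : Fin (p.length + 1) := ⟨0, by omega⟩
  set i1 : Fin (p.length + 1) := ⟨1, by omega⟩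
  set i2 : Fin (p.length + 1) := ⟨2, by omega⟩
  have h01 : p.toFun i0 < p.toFun i1 := p.strictMono (by simp [i0, i1, Fin.lt_def])
  have h12 : p.toFun i1 < p.toFun i2 := p.strictMono (by simp [i1, i2, Fin.lt_def])
  set Q' : Ideal R := (p.toFun i0).asIdeal
  set Q : Ideal R := (p.toFun i1).asIdeal
  set P : Ideal R := (p.toFun i2).asIdeal
  have hQ' : Q'.IsPrime := (p.toFun i0).isPrime
  have hQ : Q.IsPrime := (p.toFun i1).isPrime
  have hPp : P.IsPrime := (p.toFun i2).isPrime
  have hQ'Q : Q' < Q := h01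
  have hQP : Q < P := h12
  obtain ⟨wP, hwP, hwPQ', hPle⟩ :=
    exists_span_singleton_of_isDirectSumOfCyclics hQ' (h P hPp)
      (fun hle => absurd (le_trans (le_of_lt hQP) hle) (not_le_of_gt hQ'Q))
  obtain ⟨v, hvQ, hvQ', hQle⟩ :=
    exists_span_singleton_of_isDirectSumOfCyclics hQ' (h Q hQ)
      (fun hle => absurd hle (not_le_of_gt hQ'Q))
  -- wP ∉ Q, else P ≤ Q
  have hwPnQ : wP ∉ Q := by
    intro hmem
    apply not_le_of_gt hQP
    refine le_trans hPle (sup_le (le_trans (le_of_lt hQ'Q) le_rfl) ?_)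
    exact (Ideal.span_singleton_le_iff_mem _).mpr hmem
  -- v ∈ P ≤ Q' ⊔ span {wP}
  have hv : v ∈ Q' ⊔ Ideal.span {wP} := hPle (le_of_lt hQP hvQ)
  obtain ⟨a, ha, b, hb, hab⟩ := Submodule.mem_sup.mp hv
  obtain ⟨r, hr⟩ := Ideal.mem_span_singleton'.mp hb
  -- r * wP = v - a ∈ Q, wP ∉ Q prime ⇒ r ∈ Q
  have hrw : r * wP ∈ Q := by
    have : r * wP = v - a := by rw [hr, ← hab]; ring
    rw [this]
    exact Q.sub_mem hvQ (le_of_lt hQ'Q ha)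
  have hrQ : r ∈ Q := ((hQ.mem_or_mem hrw).resolve_right hwPnQ)
  -- r ∈ Q ≤ Q' ⊔ span {v}
  obtain ⟨b', hb', c, hc, hbc⟩ := Submodule.mem_sup.mp (hQle hrQ)
  obtain ⟨s, hs⟩ := Ideal.mem_span_singleton'.mp hc
  -- (1 - s * wP) * v ∈ Q'
  have hkey : (1 - s * wP) * v ∈ Q' := by
    have hveq : v = a + r * wP := by rw [hr, hab]
    have hreq : r = b' + s * v := by rw [hs, hbc]
    have : (1 - s * wP) * v = a + b' * wP := by
      linear_combination hveq + wP * hreq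
    rw [this]
    exact Q'.add_mem ha (Ideal.mul_mem_right _ _ hb')
  rcases hQ'.mem_or_mem hkey with hk | hk
  · -- 1 - s * wP ∈ Q' ≤ P and s * wP ∈ P ⇒ 1 ∈ P
    have h1 : (1 : R) ∈ P := by
      have := P.add_mem (le_trans (le_of_lt hQ'Q) (le_of_lt hQP) hk)
        (Ideal.mul_mem_left _ s hwP)
      simpa using this
    exact hPp.ne_top (Ideal.eq_top_iff_one _ |>.mpr h1)
  · exact hvQ' hk
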